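/- Let F be a finitely generated free group and H an infinite, finitely generated, commensurated subgroup of F (i.e. gHg⁻¹ is commensurable with H for every g ∈ F). Then H has finite index in F. -/

import Mathlib

set_option linter.unusedSectionVars false

open List

/-- The conjugate `g A g⁻¹` of a subgroup. -/
def conjSubgroup {F : Type*} [Group F] (g : F) (A : Subgroup F) : Subgroup F :=
  A.map (MulAut.conj g).toMonoidHom

section Transport

variable {G : Type*} {G' : Type*} [Group G] [Group G']

lemma mem_conjSubgroup (g : G) (A : Subgroup G) (x : G) :
    x ∈ conjSubgroup g A ↔ g⁻¹ * x * g ∈ A := by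
  constructor
  · rintro ⟨a, ha, rfl⟩
    simpa [MulAut.conj_apply, mul_assoc] using ha
  · intro hx
    refine ⟨g⁻¹ * x * g, hx, ?_⟩
    simp [MulAut.conj_apply, mul_assoc]

lemma conjSubgroup_conjSubgroup (a b : G) (A : Subgroup G) :
    conjSubgroup a (conjSubgroup b A) = conjSubgroup (a * b) A := by
  ext x
  rw [mem_conjSubgroup, mem_conjSubgroup, mem_conjSubgroup]
  have : b⁻¹ * (a⁻¹ * x * a) * b = (a * b)⁻¹ * x * (a * b) := by group
  rw [this]

lemma relindex_map_equiv (e : G ≃* G') (A B : Subgroup G) :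
    (A.map e.toMonoidHom).relIndex (B.map e.toMonoidHom) = A.relIndex B := by
  rw [Subgroup.map_equiv_eq_comap_symm', Subgroup.map_equiv_eq_comap_symm',
    Subgroup.relIndex_comap, Subgroup.map_comap_eq_self_of_surjective e.symm.surjective]

lemma commensurable_map (e : G ≃* G') {A B : Subgroup G} (h : Subgroup.Commensurable A B) :
    Subgroup.Commensurable (A.map e.toMonoidHom) (B.map e.toMonoidHom) := by
  exact ⟨by rw [relindex_map_equiv]; exact h.1, by rw [relindex_map_equiv]; exact h.2⟩

lemma index_map_equiv (e : G ≃* G') (A : Subgroup G) :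
    (A.map e.toMonoidHom).index = A.index := by
  rw [Subgroup.map_equiv_eq_comap_symm', Subgroup.index_comap,
    MonoidHom.range_eq_top_of_surjective _ e.symm.surjective, Subgroup.relIndex_top_right]

lemma conjSubgroup_eq_map (g : G) (A : Subgroup G) :
    conjSubgroup g A = A.map (MulAut.conj g : G ≃* G).toMonoidHom := rfl

lemma infinite_map_equiv (e : G ≃* G') (A : Subgroup G) [hA : Infinite A] :
    Infinite (A.map e.toMonoidHom) :=
  Infinite.of_injective _ (Subgroup.equivMapOfInjective A e.toMonoidHom e.injective).injective

lemma map_conjSubgroup (e : G ≃* G') (g : G) (A : Subgroup G) :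
    (conjSubgroup g A).map e.toMonoidHom = conjSubgroup (e g) (A.map e.toMonoidHom) := by
  show (A.map (MulAut.conj g).toMonoidHom).map e.toMonoidHom
      = (A.map e.toMonoidHom).map (MulAut.conj (e g)).toMonoidHom
  rw [Subgroup.map_map, Subgroup.map_map]
  congr 1
  ext a
  simp [MulAut.conj_apply, map_mul, map_inv]

end Transport

namespace Wit
variable {α : Type*} [DecidableEq α]

open FreeGroup

def RR : (α × Bool) → (α × Bool) → Prop := fun a b => ¬(b.1 = a.1 ∧ b.2 = !a.2)

instance : DecidableRel (RR (α := α)) := fun a b => by unfold RR; infer_instance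

lemma rr_comm {a b : α × Bool} : RR a b ↔ ¬(a.1 = b.1 ∧ a.2 = !b.2) := by
  unfold RR
  constructor <;> intro h hc <;> apply h <;>
    rcases hc with ⟨h1, h2⟩ <;> refine ⟨h1.symm, ?_⟩ <;> cases hb : b.2 <;> cases ha : a.2 <;>
      simp_all

lemma chain'_of_reduce_eq : ∀ {L : List (α × Bool)}, reduce L = L → IsChain RR L := by
  intro L
  induction L with
  | nil => intro _; simp
  | cons x L ih =>
    intro h
    rw [reduce.cons] at h
    rcases hr : reduce L with _ | ⟨hd, tl⟩
    · rw [hr] at h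
      simp only at h
      have : L = [] := by
        have := congrArg List.tail h
        simpa using this.symm
      subst this; simp
    · rw [hr] at h
      simp only at h
      by_cases hc : x.1 = hd.1 ∧ x.2 = !hd.2
      · rw [if_pos hc] at h
        have h1 : (hd :: tl).length ≤ L.length := hr ▸ (Red.length_le (reduce.red))
        have h2 := congrArg List.length h
        simp at h1 h2
        omega
      · rw [if_neg hc] at h
        have hL : L = hd :: tl := by
          have := congrArg List.tail h
          simpa using this.symm
        have : IsChain RR L := ih (by rw [hL] at hr ⊢; exact hr)
        rw [hL]
        refine List.isChain_cons_cons.2 ⟨?_, hL ▸ this⟩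
        exact rr_comm.2 hc

lemma reduce_eq_of_chain' : ∀ {L : List (α × Bool)}, IsChain RR L → reduce L = L := by
  intro L
  induction L with
  | nil => intro _; rfl
  | cons x L ih =>
    intro h
    have hL : IsChain RR L := (List.isChain_cons.1 h).2
    rw [reduce.cons, ih hL]
    rcases hLc : L with _ | ⟨hd, tl⟩
    · rfl
    · simp only
      rw [if_neg]
      rw [hLc] at h
      have := (List.isChain_cons_cons.1 h).1
      exact fun hc => (rr_comm.1 this) hc

lemma reduce_eq_iff_chain' {L : List (α × Bool)} : reduce L = L ↔ IsChain RR L :=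
  ⟨chain'_of_reduce_eq, reduce_eq_of_chain'⟩

lemma chain'_toWord (x : FreeGroup α) : IsChain RR x.toWord :=
  chain'_of_reduce_eq (reduce_toWord x)


lemma invRev_append (L₁ L₂ : List (α × Bool)) :
    invRev (L₁ ++ L₂) = invRev L₂ ++ invRev L₁ := by
  simp [invRev]

lemma invRev_singleton (z : α × Bool) : invRev [z] = [(z.1, !z.2)] := by
  simp [invRev]

lemma chain'_invRev {L : List (α × Bool)} (h : IsChain RR L) : IsChain RR (invRev L) := by
  unfold invRev
  rw [List.isChain_reverse]
  rw [List.isChain_map]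
  refine h.imp ?_
  rintro ⟨a1, a2⟩ ⟨b1, b2⟩ hab ⟨h1, h2⟩
  simp only at h1 h2
  apply hab
  refine ⟨h1.symm, ?_⟩
  cases a2 <;> cases b2 <;> simp at h2 ⊢

lemma cancel_aux : ∀ (L₁ : List (α × Bool)), IsChain RR L₁ → ∀ (L₂ : List (α × Bool)),
    IsChain RR L₂ → ∃ p r q, L₁ = p ++ r ∧ L₂ = invRev r ++ q ∧
      reduce (L₁ ++ L₂) = p ++ q := by
  intro L₁
  induction L₁ using List.reverseRecOn with
  | nil =>
    intro _ L₂ h₂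
    exact ⟨[], [], L₂, rfl, by simp [invRev], by simpa using reduce_eq_of_chain' h₂⟩
  | append_singleton L z ih =>
    intro h₁ L₂ h₂
    rcases L₂ with _ | ⟨z', L₂'⟩
    · refine ⟨L ++ [z], [], [], by simp, by simp [invRev], ?_⟩
      simpa using reduce_eq_of_chain' h₁
    · by_cases hc : z'.1 = z.1 ∧ z'.2 = !z.2
      · obtain ⟨hc1, hc2⟩ := hc
        have hz' : z' = (z.1, !z.2) := Prod.ext hc1 hc2
        have hstep : (L ++ [z]) ++ (z' :: L₂') = L ++ ((z.1, z.2) :: (z.1, !z.2) :: L₂') := by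
          rw [hz']
          simp
        have hred : reduce ((L ++ [z]) ++ (z' :: L₂')) = reduce (L ++ L₂') := by
          rw [hstep]
          exact reduce.Step.eq (Red.Step.not)
        have hL : IsChain RR L := h₁.prefix ⟨[z], rfl⟩
        have hL₂' : IsChain RR L₂' := h₂.suffix ⟨[z'], rfl⟩
        obtain ⟨p, r, q, e1, e2, e3⟩ := ih hL L₂' hL₂'
        refine ⟨p, r ++ [z], q, by rw [e1]; simp, ?_, by rw [hred, e3]⟩
        rw [invRev_append, invRev_singleton, e2, hz']
        simp
      · have hch : IsChain RR ((L ++ [z]) ++ (z' :: L₂')) := by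
          refine h₁.append h₂ ?_
          intro x hx y hy
          rw [List.getLast?_concat] at hx
          simp only [head?_cons, Option.mem_some_iff] at hx hy
          subst hx; subst hy
          exact hc
        exact ⟨L ++ [z], [], z' :: L₂', by simp, by simp [invRev], reduce_eq_of_chain' hch⟩

lemma toWord_mul_decomp (x y : FreeGroup α) :
    ∃ p r q, x.toWord = p ++ r ∧ y.toWord = invRev r ++ q ∧ (x * y).toWord = p ++ q := by
  obtain ⟨p, r, q, e1, e2, e3⟩ := cancel_aux x.toWord (chain'_toWord x) y.toWord (chain'_toWord y)
  refine ⟨p, r, q, e1, e2, ?_⟩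
  have : x * y = FreeGroup.mk (x.toWord ++ y.toWord) := by
    rw [← FreeGroup.mul_mk, FreeGroup.mk_toWord, FreeGroup.mk_toWord]
  rw [this, FreeGroup.toWord_mk, e3]

lemma chain'_pow_aux {W : List (α × Bool)} (hW : IsChain RR (W ++ W)) :
    ∀ n : ℕ, IsChain RR (W ++ (List.replicate n W).flatten) := by
  intro n
  induction n with
  | zero => simpa using hW.left_of_append
  | succ n ih =>
    rw [List.replicate_succ, List.flatten_cons]
    refine (hW.left_of_append).append ih ?_
    intro x hx y hy
    rcases hWe : W with _ | ⟨w0, W'⟩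
    · rw [hWe] at hx; simp at hx
    · rw [head?_append_of_ne_nil _ (by simp [hWe])] at hy
      rw [hWe, head?_cons, Option.mem_some_iff] at hy
      subst hy
      exact ((List.isChain_append.1 hW).2.2) x hx w0 (by rw [hWe]; rfl)

lemma getLast?_pow_aux (W : List (α × Bool)) :
    ∀ m : ℕ, (W ++ (List.replicate m W).flatten).getLast? = W.getLast? := by
  intro m
  induction m with
  | zero => simp
  | succ m ih =>
    rcases hWe : W with _ | ⟨w0, W'⟩
    · simp
    · rw [← hWe, List.replicate_succ, List.flatten_cons,
        List.getLast?_append_of_ne_nil _ (l₂ := W ++ (List.replicate m W).flatten)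
          (by simp [hWe]), ih]

lemma toWord_mk_pow {W : List (α × Bool)} (hW : IsChain RR (W ++ W)) (m : ℕ) :
    (FreeGroup.mk W ^ (m + 1)).toWord = W ++ (List.replicate m W).flatten := by
  rw [FreeGroup.pow_mk, FreeGroup.toWord_mk, List.replicate_succ, List.flatten_cons]
  exact reduce_eq_of_chain' (chain'_pow_aux hW m)

/-- The finite set of cosets: suffix cosets of the generators' words, plus the identity coset. -/
def Base (H : Subgroup (FreeGroup α)) (T : Finset (FreeGroup α)) : Set (FreeGroup α ⧸ H) :=
  insert ((1 : FreeGroup α) : FreeGroup α ⧸ H)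
    (⋃ t ∈ (T : Set (FreeGroup α)), (fun q => ((FreeGroup.mk q : FreeGroup α) : FreeGroup α ⧸ H))
      '' {q | q ∈ t.toWord.tails})

lemma base_finite (H : Subgroup (FreeGroup α)) (T : Finset (FreeGroup α)) :
    (Base H T).Finite := by
  refine Set.Finite.insert _ (Set.Finite.biUnion T.finite_toSet fun t _ => ?_)
  exact (t.toWord.tails.finite_toSet).image _

lemma suffix_coset {H : Subgroup (FreeGroup α)} {T : Finset (FreeGroup α)}
    (hT : Subgroup.closure (T : Set (FreeGroup α)) = H) :
    ∀ u ∈ H, ∀ q, q <:+ u.toWord →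
      ((FreeGroup.mk q : FreeGroup α) : FreeGroup α ⧸ H) ∈ Base H T := by
  intro u hu
  rw [← hT] at hu
  induction hu using Subgroup.closure_induction with
  | mem t ht =>
    intro q hq
    exact Set.mem_insert_of_mem _
      (Set.mem_biUnion ht ⟨q, List.mem_tails _ _ |>.2 hq, rfl⟩)
  | one =>
    intro q hq
    rw [FreeGroup.toWord_one, List.suffix_nil] at hq
    subst hq
    rw [← FreeGroup.one_eq_mk]
    exact Set.mem_insert _ _
  | mul x y hx hy px py =>
    intro q hq
    have hyH : y ∈ H := hT ▸ hy
    obtain ⟨p₁, r, q₂, e1, e2, e3⟩ := toWord_mul_decomp x y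
    rw [e3] at hq
    obtain ⟨s, hs⟩ := hq
    rcases List.append_eq_append_iff.1 hs with ⟨a', ha1, ha2⟩ | ⟨a', ha1, ha2⟩
    · -- p₁ = s ++ a', q = a' ++ q₂
      have hq2 : FreeGroup.mk q₂ = FreeGroup.mk r * y := by
        have : y = FreeGroup.mk (invRev r ++ q₂) := by rw [← e2, FreeGroup.mk_toWord]
        rw [this, ← FreeGroup.mul_mk, ← FreeGroup.inv_mk, ← mul_assoc, mul_inv_cancel, one_mul]
      have hmkq : FreeGroup.mk q = FreeGroup.mk (a' ++ r) * y := by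
        rw [ha2, ← FreeGroup.mul_mk, hq2, ← FreeGroup.mul_mk, mul_assoc]
      rw [hmkq, QuotientGroup.mk_mul_of_mem _ hyH]
      exact px (a' ++ r) ⟨s, by rw [e1, ha1, List.append_assoc]⟩
    · -- s = p₁ ++ a', q₂ = a' ++ q
      exact py q ⟨invRev r ++ a', by rw [e2, ha2, List.append_assoc]⟩
  | inv x hx px =>
    intro q hq
    have hxH : x ∈ H := hT ▸ hx
    rw [FreeGroup.toWord_inv] at hq
    obtain ⟨s, hs⟩ := hq
    have hX : x.toWord = invRev q ++ invRev s := by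
      have := congrArg invRev hs
      rw [invRev_invRev, invRev_append] at this
      exact this.symm
    have hmkq : FreeGroup.mk q = FreeGroup.mk (invRev s) * x⁻¹ := by
      have hx' : x = FreeGroup.mk (invRev q ++ invRev s) := by rw [← hX, FreeGroup.mk_toWord]
      rw [hx', ← FreeGroup.mul_mk, mul_inv_rev, ← FreeGroup.inv_mk, ← FreeGroup.inv_mk,
        ← mul_assoc, mul_inv_cancel, one_mul, inv_inv]
    rw [hmkq, QuotientGroup.mk_mul_of_mem _ (inv_mem hxH)]
    exact px (invRev s) ⟨invRev q, hX.symm⟩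

lemma cyc_red_aux : ∀ (n : ℕ) (x : FreeGroup α), x.toWord.length = n → x ≠ 1 →
    ∃ c w : FreeGroup α, x = c * w * c⁻¹ ∧ w ≠ 1 ∧ IsChain RR (w.toWord ++ w.toWord) := by
  intro n
  induction n using Nat.strong_induction_on with
  | _ n ih =>
  intro x hn hx
  by_cases hj : ∀ l ∈ x.toWord.getLast?, ∀ x0 ∈ x.toWord.head?, RR l x0
  · exact ⟨1, x, by group, hx, (chain'_toWord x).append (chain'_toWord x) hj⟩
  · push_neg at hj
    obtain ⟨l, hl, x0, hx0, hn'⟩ := hj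
    have hne : x.toWord ≠ [] := fun he => by simp [he] at hl
    rw [RR, not_not] at hn'
    obtain ⟨h1, h2⟩ := hn'
    -- x.toWord = x0 :: mid ++ [l]
    rcases hXe : x.toWord with _ | ⟨x0, X'⟩
    · exact absurd hXe hne
    rw [hXe] at hx0 hl
    rw [List.head?_cons, Option.mem_some_iff] at hx0
    subst hx0
    have hX'ne : X' ≠ [] := by
      rintro rfl
      simp only [List.getLast?_singleton, Option.mem_some_iff] at hl
      subst hl
      simp at h2
    have hX'dec : X'.dropLast ++ [X'.getLast hX'ne] = X' := List.dropLast_append_getLast hX'ne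
    have hlval : X'.getLast hX'ne = l := by
      have : (x0 :: X').getLast (by simp) = l := by
        rw [List.getLast?_eq_getLast (by simp), Option.mem_some_iff] at hl
        exact hl
      rwa [List.getLast_cons hX'ne] at this
    set M := X'.dropLast with hM
    have hXfull : x.toWord = x0 :: (M ++ [l]) := by rw [hXe, ← hlval, hX'dec]
    have hlx0 : l = (x0.1, !x0.2) := by
      obtain ⟨la, lb⟩ := l; obtain ⟨xa, xb⟩ := x0
      simp only at h1 h2
      subst h1
      cases lb <;> simp_all
    -- x = mk [x0] * mk M * (mk [x0])⁻¹
    have hxeq : x = FreeGroup.mk [x0] * FreeGroup.mk M * (FreeGroup.mk [x0])⁻¹ := by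
      rw [FreeGroup.inv_mk, invRev_singleton, ← hlx0, FreeGroup.mul_mk, FreeGroup.mul_mk,
        List.append_assoc, List.singleton_append, ← hXfull, FreeGroup.mk_toWord]
    have hMred : reduce M = M := by
      refine reduce_eq_of_chain' ((chain'_toWord x).infix ?_)
      exact ⟨[x0], [l], by rw [hXfull]; simp⟩
    have hx'ne : FreeGroup.mk M ≠ 1 := by
      intro hem
      rw [hem] at hxeq
      apply hx
      rw [hxeq]
      group
    have hlen : (FreeGroup.mk M).toWord.length < n := by
      rw [FreeGroup.toWord_mk, hMred, ← hn, hXfull]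
      simp
    obtain ⟨c, ww, e1, e2, e3⟩ := ih _ hlen (FreeGroup.mk M) rfl hx'ne
    exact ⟨FreeGroup.mk [x0] * c, ww, by rw [hxeq, e1]; group, e2, e3⟩

lemma cyc_red (x : FreeGroup α) (hx : x ≠ 1) :
    ∃ c w : FreeGroup α, x = c * w * c⁻¹ ∧ w ≠ 1 ∧ IsChain RR (w.toWord ++ w.toWord) :=
  cyc_red_aux x.toWord.length x rfl hx

lemma small_case {β : Type*} (hs : ∀ p q : β, p = q) (H : Subgroup (FreeGroup β))
    (h0 : FreeGroup β) (h0H : h0 ∈ H) (h0ne : h0 ≠ 1) : H.index ≠ 0 := by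
  letI : DecidableEq β := Classical.decEq β
  have hXne : h0.toWord ≠ [] := fun he => h0ne (FreeGroup.toWord_eq_nil_iff.1 he)
  set a : β := (h0.toWord.head hXne).1 with ha
  have all_pow : ∀ x : FreeGroup β, x ∈ Subgroup.zpowers (FreeGroup.of a) := by
    have aux : ∀ L : List (β × Bool), FreeGroup.mk L ∈ Subgroup.zpowers (FreeGroup.of a) := by
      intro L
      induction L with
      | nil => rw [← FreeGroup.one_eq_mk]; exact one_mem _
      | cons z L' ihL =>
        have hsplit : FreeGroup.mk (z :: L') = FreeGroup.mk [z] * FreeGroup.mk L' := by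
          rw [FreeGroup.mul_mk, List.singleton_append]
        rw [hsplit]
        refine mul_mem ?_ ihL
        obtain ⟨za, zb⟩ := z
        have hza : za = a := hs _ _
        rw [hza]
        cases zb
        · have : FreeGroup.mk [(a, false)] = (FreeGroup.of a)⁻¹ := by
            rw [show FreeGroup.of a = FreeGroup.mk [(a, true)] from rfl, FreeGroup.inv_mk,
              invRev_singleton]
            rfl
          rw [this]
          exact inv_mem (Subgroup.mem_zpowers _)
        · exact Subgroup.mem_zpowers _
    intro x
    rw [← FreeGroup.mk_toWord (x := x)]
    exact aux _
  obtain ⟨n, hn⟩ := Subgroup.mem_zpowers_iff.1 (all_pow h0)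
  have hn0 : n ≠ 0 := by rintro rfl; rw [zpow_zero] at hn; exact h0ne hn.symm
  set N : ℕ := n.natAbs with hN
  have hNpos : 0 < N := Int.natAbs_pos.2 hn0
  have hNH : (FreeGroup.of a) ^ (N : ℤ) ∈ H := by
    rcases Int.natAbs_eq n with he | he
    · rw [← he, hn]; exact h0H
    · have : (N : ℤ) = -n := by omega
      rw [this, zpow_neg, hn]
      exact inv_mem h0H
  have hsurj : Function.Surjective
      (fun i : Fin N => ((FreeGroup.of a ^ (i : ℕ) : FreeGroup β) : FreeGroup β ⧸ H)) := by
    intro cq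
    obtain ⟨x, rfl⟩ := QuotientGroup.mk_surjective cq
    obtain ⟨m, hm⟩ := Subgroup.mem_zpowers_iff.1 (all_pow x)
    set r : ℤ := m % (N : ℤ) with hr
    have hNne : (N : ℤ) ≠ 0 := by exact_mod_cast hNpos.ne'
    have hr0 : 0 ≤ r := Int.emod_nonneg m hNne
    have hrlt : r < N := Int.emod_lt_of_pos m (by exact_mod_cast hNpos)
    refine ⟨⟨r.toNat, by omega⟩, ?_⟩
    simp only
    rw [QuotientGroup.eq]
    have hcast : ((r.toNat : ℕ) : ℤ) = r := Int.toNat_of_nonneg hr0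
    have emod := Int.emod_add_mul_ediv m (N : ℤ)
    have key : (FreeGroup.of a ^ (r.toNat : ℕ))⁻¹ * x
        = (FreeGroup.of a ^ (N : ℤ)) ^ (m / (N : ℤ)) := by
      rw [← hm, ← zpow_natCast, hcast, ← zpow_neg, ← zpow_add, ← zpow_mul]
      congr 1
      omega
    rw [key]
    exact zpow_mem hNH _
  have : Finite (FreeGroup β ⧸ H) := Finite.of_surjective _ hsurj
  exact Subgroup.index_ne_zero_of_finite

lemma getLast?_invRev (L : List (α × Bool)) :
    (invRev L).getLast? = L.head?.map (fun z => (z.1, !z.2)) := by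
  unfold FreeGroup.invRev
  rw [List.getLast?_reverse, List.head?_map]


theorem freeGroup_main {α : Type*} (H : Subgroup (FreeGroup α)) (hinf : Infinite H)
    (hfg : H.FG) (hcomm : ∀ g : FreeGroup α, Subgroup.Commensurable (conjSubgroup g H) H) :
    H.index ≠ 0 := by
  letI : DecidableEq α := Classical.decEq α
  obtain ⟨h0, h0H, h0ne⟩ := (Subgroup.nontrivial_iff_exists_ne_one H).1 inferInstance
  by_cases hα : ∀ p q : α, p = q
  · exact small_case hα H h0 h0H h0ne
  push_neg at hα
  obtain ⟨A, B, hAB⟩ := hα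
  obtain ⟨c, w, hcw, hwne, hWcyc⟩ := cyc_red h0 h0ne
  set H' : Subgroup (FreeGroup α) := conjSubgroup c⁻¹ H with hH'
  have hwH' : w ∈ H' := by
    rw [hH', mem_conjSubgroup, inv_inv, ← hcw]
    exact h0H
  have hidx : H'.index = H.index := index_map_equiv (MulAut.conj c⁻¹) H
  rw [← hidx]
  have hcomm' : ∀ g : FreeGroup α, Subgroup.Commensurable (conjSubgroup g H') H' := by
    intro g
    have h1 := commensurable_map (G' := FreeGroup α) (MulAut.conj c⁻¹) (hcomm (c * g * c⁻¹))
    have e1 : (conjSubgroup (c * g * c⁻¹) H).map (MulAut.conj c⁻¹).toMonoidHom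
        = conjSubgroup g H' := by
      show conjSubgroup c⁻¹ (conjSubgroup (c * g * c⁻¹) H) = conjSubgroup g (conjSubgroup c⁻¹ H)
      rw [conjSubgroup_conjSubgroup, conjSubgroup_conjSubgroup]
      congr 1
      group
    have e2 : H.map (MulAut.conj c⁻¹).toMonoidHom = H' := rfl
    rwa [e1, e2] at h1
  obtain ⟨T0, hT0⟩ := hfg
  set T : Finset (FreeGroup α) := T0.image (fun t => c⁻¹ * t * c) with hTdef
  have hT : Subgroup.closure (T : Set (FreeGroup α)) = H' := by
    rw [hTdef, Finset.coe_image]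
    have hfun : (fun t : FreeGroup α => c⁻¹ * t * c)
        = ((MulAut.conj c⁻¹).toMonoidHom : FreeGroup α →* FreeGroup α) := by
      funext t
      simp [MulAut.conj_apply]
    rw [hfun, ← MonoidHom.map_closure, hT0]
    rfl
  set W := w.toWord with hWdef
  have hWne : W ≠ [] := fun he => hwne (FreeGroup.toWord_eq_nil_iff.1 he)
  obtain ⟨w0, W0, hW0⟩ : ∃ w0 W0, W = w0 :: W0 := by
    rcases hWe : W with _ | ⟨w0, W0⟩
    · exact absurd hWe hWne
    · exact ⟨w0, W0, rfl⟩
  set wl := W.getLast hWne with hwl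
  set bad2 : α × Bool := (wl.1, !wl.2) with hbad2
  have hpow : ∀ x : FreeGroup α, ∃ m : ℕ, x⁻¹ * w ^ (m + 1) * x ∈ H' := by
    intro x
    obtain ⟨k, hk0, _, hkmem⟩ :=
      Subgroup.exists_pow_mem_of_relIndex_ne_zero (hcomm' x).1 hwH'
    have hmem : w ^ k ∈ conjSubgroup x H' := hkmem.1
    rw [mem_conjSubgroup] at hmem
    exact ⟨k - 1, by rwa [Nat.sub_add_cancel hk0]⟩
  have good : ∀ x : FreeGroup α, ∀ x0 X', x.toWord = x0 :: X' → x0 ≠ w0 → x0 ≠ bad2 →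
      ((x : FreeGroup α ⧸ H') ∈ Base H' T) := by
    intro x x0 X' hXe hb1 hb2
    obtain ⟨m, hm⟩ := hpow x
    have hwmk : w = FreeGroup.mk W := (FreeGroup.mk_toWord).symm
    set Wm := W ++ (List.replicate m W).flatten with hWm
    have hWmne : Wm ≠ [] := by
      rw [hWm, hW0]; simp
    have hwm : w ^ (m + 1) = FreeGroup.mk Wm := by
      have h2 : (w ^ (m+1)).toWord = Wm := by
        rw [hwmk]; exact toWord_mk_pow hWcyc m
      rw [← h2, FreeGroup.mk_toWord]
    have hchain : IsChain RR (invRev x.toWord ++ (Wm ++ x.toWord)) := by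
      refine IsChain.append (chain'_invRev (chain'_toWord x)) ?_ ?_
      · refine IsChain.append (chain'_pow_aux hWcyc m) (chain'_toWord x) ?_
        intro p hp q hq
        rw [hWm, getLast?_pow_aux W m, List.getLast?_eq_getLast hWne,
          Option.mem_some_iff] at hp
        rw [hXe, List.head?_cons, Option.mem_some_iff] at hq
        subst hp; subst hq
        rintro ⟨e1', e2'⟩
        exact hb2 (Prod.ext e1' e2')
      · intro p hp q hq
        rw [getLast?_invRev, hXe, List.head?_cons, Option.map_some] at hp
        rw [head?_append_of_ne_nil _ hWmne, hWm, hW0, List.cons_append, List.head?_cons,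
          Option.mem_some_iff] at hq
        subst hq
        simp only [Option.mem_some_iff] at hp
        subst hp
        rintro ⟨e1', e2'⟩
        rw [Bool.not_not] at e2'
        exact hb1 (Prod.ext e1'.symm e2'.symm)
    have hu : x⁻¹ * w ^ (m+1) * x = FreeGroup.mk (invRev x.toWord ++ (Wm ++ x.toWord)) := by
      nth_rewrite 1 [← FreeGroup.mk_toWord (x := x)]
      nth_rewrite 2 [← FreeGroup.mk_toWord (x := x)]
      rw [hwm, FreeGroup.inv_mk, FreeGroup.mul_mk, FreeGroup.mul_mk, List.append_assoc]
    have huword : (x⁻¹ * w ^ (m+1) * x).toWord = invRev x.toWord ++ (Wm ++ x.toWord) := by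
      rw [hu, FreeGroup.toWord_mk, reduce_eq_of_chain' hchain]
    have hsuffix : x.toWord <:+ (x⁻¹ * w ^ (m+1) * x).toWord :=
      ⟨invRev x.toWord ++ Wm, by rw [huword, List.append_assoc]⟩
    have hres := suffix_coset hT _ hm x.toWord hsuffix
    rwa [FreeGroup.mk_toWord] at hres
  set P : Finset (α × Bool) := {(A, true), (A, false), (B, true), (B, false)} with hP
  have hPcard : P.card = 4 := by
    rw [hP, Finset.card_insert_of_notMem (by simp [hAB]),
      Finset.card_insert_of_notMem (by simp [hAB]),
      Finset.card_insert_of_notMem (by simp), Finset.card_singleton]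
  set Full : Set (FreeGroup α ⧸ H') := Base H' T ∪
    ⋃ s ∈ (P : Set (α × Bool)),
      (fun z : FreeGroup α ⧸ H' => ((FreeGroup.mk [s] : FreeGroup α))⁻¹ • z) '' Base H' T
    with hFull
  have hFullfin : Full.Finite := by
    refine (base_finite H' T).union ?_
    exact Set.Finite.biUnion P.finite_toSet fun s _ => (base_finite H' T).image _
  have hcover : ∀ x : FreeGroup α, ((x : FreeGroup α ⧸ H')) ∈ Full := by
    intro x
    rcases hXe : x.toWord with _ | ⟨x0, X'⟩
    · have hx1 : x = 1 := FreeGroup.toWord_eq_nil_iff.1 hXe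
      rw [hFull, hx1]
      exact Or.inl (Set.mem_insert _ _)
    · by_cases hgood : x0 ≠ w0 ∧ x0 ≠ bad2
      · exact Or.inl (good x x0 X' hXe hgood.1 hgood.2)
      · set bads : Finset (α × Bool) := {w0, bad2, (x0.1, !x0.2)} with hbads
        have hbadscard : bads.card ≤ 3 := by
          refine le_trans (Finset.card_insert_le _ _) ?_
          have := Finset.card_insert_le bad2 ({(x0.1, !x0.2)} : Finset (α × Bool))
          simp only [Finset.card_singleton] at this ⊢
          omega
        have hnotsub : ¬ (P ⊆ bads) := fun hsub => by
          have := Finset.card_le_card hsub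
          omega
        obtain ⟨s, hsP, hsbad⟩ := Finset.not_subset.1 hnotsub
        rw [hbads] at hsbad
        simp only [Finset.mem_insert, Finset.mem_singleton, not_or] at hsbad
        obtain ⟨hs1, hs2, hs3⟩ := hsbad
        have hx'mk : FreeGroup.mk [s] * x = FreeGroup.mk (s :: x.toWord) := by
          nth_rewrite 1 [← FreeGroup.mk_toWord (x := x)]
          rw [FreeGroup.mul_mk, List.singleton_append]
        have hx'word : (FreeGroup.mk [s] * x).toWord = s :: x.toWord := by
          rw [hx'mk, FreeGroup.toWord_mk]
          refine reduce_eq_of_chain' (List.isChain_cons.2 ⟨?_, chain'_toWord x⟩)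
          intro y hy
          rw [hXe, List.head?_cons, Option.mem_some_iff] at hy
          subst hy
          rintro ⟨e1', e2'⟩
          exact hs3 (Prod.ext e1'.symm (by rw [e2', Bool.not_not]))
        have hx'good := good (FreeGroup.mk [s] * x) s x.toWord hx'word hs1 hs2
        refine Or.inr (Set.mem_biUnion hsP ⟨_, hx'good, ?_⟩)
        show ((FreeGroup.mk [s] : FreeGroup α))⁻¹ • ((FreeGroup.mk [s] * x : FreeGroup α) :
          FreeGroup α ⧸ H') = (x : FreeGroup α ⧸ H')
        rw [MulAction.Quotient.smul_mk, smul_eq_mul, inv_mul_cancel_left]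
  have hfin : Finite (FreeGroup α ⧸ H') := by
    refine Set.finite_univ_iff.1 (hFullfin.subset ?_)
    intro q _
    obtain ⟨x, rfl⟩ := QuotientGroup.mk_surjective q
    exact hcover x
  exact Subgroup.index_ne_zero_of_finite

end Wit

theorem stmt19 {F : Type*} [Group F] [IsFreeGroup F] (hfg : Group.FG F)
    (H : Subgroup F) (hinf : Infinite ↥H) (hHfg : H.FG)
    (hcomm : ∀ g : F, Subgroup.Commensurable (conjSubgroup g H) H) :
    H.index ≠ 0 := by
  classical
  let e : F ≃* FreeGroup (IsFreeGroup.Generators F) := IsFreeGroup.toFreeGroup F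
  set H₂ : Subgroup (FreeGroup (IsFreeGroup.Generators F)) := H.map e.toMonoidHom with hH₂
  have hidx : H₂.index = H.index := index_map_equiv e H
  have hinf₂ : Infinite H₂ := infinite_map_equiv e H
  have hfg₂ : H₂.FG := by
    obtain ⟨T0, hT0⟩ := hHfg
    refine ⟨T0.image (fun t => e t), ?_⟩
    rw [Finset.coe_image, hH₂, ← hT0]
    exact (MonoidHom.map_closure e.toMonoidHom _).symm
  have hcomm₂ : ∀ g' : FreeGroup (IsFreeGroup.Generators F),
      Subgroup.Commensurable (conjSubgroup g' H₂) H₂ := by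
    intro g'
    have h1 := commensurable_map e (hcomm (e.symm g'))
    rw [map_conjSubgroup e (e.symm g') H, MulEquiv.apply_symm_apply] at h1
    exact h1
  rw [← hidx]
  exact Wit.freeGroup_main H₂ hinf₂ hfg₂ hcomm₂
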